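/- Let X ∈ ℍ^{M×N} admit a QSVD X = U * D * Vᴴ with singular values σ, and let d be a natural number such that σ i = 0 for every index i whose numerical value is at least d (i.e. X has at most d nonzero singular values). Then there exist quaternion matrices U' ∈ ℍ^{M×d} and V' ∈ ℍ^{N×d} such that X = U' * (V')ᴴ. -/

import Mathlib

noncomputable section

open Matrix

abbrev ℍ : Type := Quaternion ℝ

/-- The `M × N` rectangular diagonal quaternion matrix of `σ : Fin K → ℝ`:
entry `(i, j)` is `σ i` when `i` and `j` have equal numerical index (below `K`), else `0`. -/
def rectDiag (M N : ℕ) {K : ℕ} (σ : Fin K → ℝ) : Matrix (Fin M) (Fin N) ℍ :=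
  Matrix.of fun i j =>
    if h : (i : ℕ) = (j : ℕ) ∧ (i : ℕ) < K then ((σ ⟨i, h.2⟩ : ℝ) : ℍ) else 0

/-- A square quaternion matrix is unitary if `A * Aᴴ = Aᴴ * A = 1`. -/
def IsUnitary {n : ℕ} (A : Matrix (Fin n) (Fin n) ℍ) : Prop :=
  A * Aᴴ = 1 ∧ Aᴴ * A = 1

/-- `IsQSVD A U σ V` : `A = U * D * Vᴴ` is a quaternion singular value decomposition of `A`,
with `U`, `V` unitary and `σ` a nonincreasing nonnegative family of singular values. -/
def IsQSVD {M N : ℕ} (A : Matrix (Fin M) (Fin N) ℍ)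
    (U : Matrix (Fin M) (Fin M) ℍ) (σ : Fin (min M N) → ℝ)
    (V : Matrix (Fin N) (Fin N) ℍ) : Prop :=
  IsUnitary U ∧ IsUnitary V ∧ Antitone σ ∧ (∀ i, 0 ≤ σ i) ∧
    A = U * rectDiag M N σ * Vᴴ

/-- `A` admits a QSVD with singular values `σ`. -/
def HasQSVD {M N : ℕ} (A : Matrix (Fin M) (Fin N) ℍ) (σ : Fin (min M N) → ℝ) : Prop :=
  ∃ U V, IsQSVD A U σ V

lemma rectDiag_factor {M N d : ℕ} (σ : Fin (min M N) → ℝ)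
    (hd : ∀ i : Fin (min M N), d ≤ (i : ℕ) → σ i = 0) :
    rectDiag M N σ =
      (Matrix.of fun (i : Fin M) (k : Fin d) =>
        if h : (i : ℕ) = (k : ℕ) ∧ (i : ℕ) < min M N then ((σ ⟨i, h.2⟩ : ℝ) : ℍ) else 0) *
      (Matrix.of fun (j : Fin N) (k : Fin d) =>
        if (j : ℕ) = (k : ℕ) ∧ (j : ℕ) < min M N then (1 : ℍ) else 0)ᴴ := by
  refine Matrix.ext fun i j => ?_
  rw [mul_apply]
  simp only [conjTranspose_apply, of_apply, rectDiag]
  by_cases hij : (i : ℕ) = (j : ℕ) ∧ (i : ℕ) < min M N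
  · by_cases hid : (i : ℕ) < d
    · rw [dif_pos hij, Finset.sum_eq_single (⟨(i : ℕ), hid⟩ : Fin d)]
      · rw [dif_pos ⟨rfl, hij.2⟩, if_pos ⟨hij.1.symm, hij.1 ▸ hij.2⟩, star_one, mul_one]
      · intro k _ hk
        have hk' : ¬((i : ℕ) = (k : ℕ) ∧ (i : ℕ) < min M N) := by
          rintro ⟨h1, -⟩
          exact hk (by ext; simp [← h1])
        rw [dif_neg hk', zero_mul]
      · simp
    · have hσ : σ ⟨i, hij.2⟩ = 0 := hd _ (le_of_not_gt hid)
      rw [dif_pos hij, hσ, Finset.sum_eq_zero]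
      · simp
      · intro k _
        by_cases hik : (i : ℕ) = (k : ℕ) ∧ (i : ℕ) < min M N
        · have : σ ⟨i, hik.2⟩ = 0 := hd _ (le_of_not_gt hid)
          rw [dif_pos hik, this]
          simp
        · rw [dif_neg hik, zero_mul]
  · rw [dif_neg hij, Finset.sum_eq_zero]
    intro k _
    by_cases hik : (i : ℕ) = (k : ℕ) ∧ (i : ℕ) < min M N
    · have hjk : ¬((j : ℕ) = (k : ℕ) ∧ (j : ℕ) < min M N) := by
        rintro ⟨h1, h2⟩
        exact hij ⟨hik.1.trans h1.symm, hik.2⟩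
      rw [if_neg hjk, star_zero, mul_zero]
    · rw [dif_neg hik, zero_mul]

/-- Binary factorization: if `X` has at most `d` nonzero singular values then
`X = U' * V'ᴴ` for some `U' : ℍ^{M×d}`, `V' : ℍ^{N×d}`. -/
theorem qsvd_binary_factorization {M N d : ℕ} (X : Matrix (Fin M) (Fin N) ℍ)
    (U : Matrix (Fin M) (Fin M) ℍ) (σ : Fin (min M N) → ℝ)
    (V : Matrix (Fin N) (Fin N) ℍ) (hX : IsQSVD X U σ V)
    (hd : ∀ i : Fin (min M N), d ≤ (i : ℕ) → σ i = 0) :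
    ∃ (U' : Matrix (Fin M) (Fin d) ℍ) (V' : Matrix (Fin N) (Fin d) ℍ),
      X = U' * V'ᴴ := by
  obtain ⟨hU, hV, hmono, hpos, hA⟩ := hX
  set E : Matrix (Fin M) (Fin d) ℍ := Matrix.of fun i k =>
    if h : (i : ℕ) = (k : ℕ) ∧ (i : ℕ) < min M N then ((σ ⟨i, h.2⟩ : ℝ) : ℍ) else 0
  set F : Matrix (Fin N) (Fin d) ℍ := Matrix.of fun j k =>
    if (j : ℕ) = (k : ℕ) ∧ (j : ℕ) < min M N then (1 : ℍ) else 0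
  refine ⟨U * E, V * F, ?_⟩
  rw [hA, rectDiag_factor σ hd, conjTranspose_mul]
  simp only [Matrix.mul_assoc]
  rfl
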